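/- For α ∈ (0,1), let w : [0,1] → ℝ be the Prelec probability weighting function defined by w(x) = exp(−(−ln x)^α) for x ∈ (0,1] and w(0) = 0. Then w is strictly concave on the interval (0, 1/e] and strictly convex on the interval [1/e, 1); in particular the inflection point of w is at x = 1/e, independent of α. -/

import Mathlib

noncomputable def prelec (α : ℝ) (x : ℝ) : ℝ :=
  if x = 0 then 0 else Real.exp (-(-Real.log x) ^ α)

namespace PrelecAux

open Real Set Filter

/-- smooth version -/
noncomputable def F (α : ℝ) (x : ℝ) : ℝ := Real.exp (-(-Real.log x) ^ α)

/-- first derivative -/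
noncomputable def G (α : ℝ) (x : ℝ) : ℝ :=
  F α x * (α * (-Real.log x) ^ (α - 1) * x⁻¹)

lemma hasDerivAt_F {α x : ℝ} (hx0 : 0 < x) (hx1 : x < 1) :
    HasDerivAt (F α) (G α x) x := by
  have ht : 0 < -Real.log x := by
    have := Real.log_neg hx0 hx1; linarith
  have hlog : HasDerivAt Real.log x⁻¹ x := Real.hasDerivAt_log hx0.ne'
  have ht' : HasDerivAt (fun y => -Real.log y) (-x⁻¹) x := hlog.neg
  have hrp : HasDerivAt (fun y => (-Real.log y) ^ α)
      (-x⁻¹ * α * (-Real.log x) ^ (α - 1)) x := ht'.rpow_const (Or.inl ht.ne')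
  have := (hrp.neg).exp
  refine this.congr_deriv ?_
  unfold G F
  simp only [Pi.neg_apply, Pi.mul_apply]
  ring

lemma hasDerivAt_G {α x : ℝ} (hx0 : 0 < x) (hx1 : x < 1) :
    HasDerivAt (G α)
      (α * F α x * (x ^ 2)⁻¹ * (-Real.log x) ^ (α - 2) *
        (α * (-Real.log x) ^ α + (1 - α) - -Real.log x)) x := by
  have ht : 0 < -Real.log x := by
    have := Real.log_neg hx0 hx1; linarith
  have hlog : HasDerivAt Real.log x⁻¹ x := Real.hasDerivAt_log hx0.ne'
  have ht' : HasDerivAt (fun y => -Real.log y) (-x⁻¹) x := hlog.neg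
  have hF : HasDerivAt (F α) (G α x) x := hasDerivAt_F hx0 hx1
  have h1 : HasDerivAt (fun y => (-Real.log y) ^ (α - 1))
      (-x⁻¹ * (α - 1) * (-Real.log x) ^ (α - 1 - 1)) x := ht'.rpow_const (Or.inl ht.ne')
  have h2 : HasDerivAt (fun y : ℝ => y⁻¹) (-(x ^ 2)⁻¹) x := hasDerivAt_inv hx0.ne'
  have h3 := h1.mul h2
  have h4 := hF.mul (h3.const_mul α)
  have hG : G α = fun y => F α y * (α * ((-Real.log y) ^ (α - 1) * y⁻¹)) := by
    funext y; unfold G; ring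
  rw [hG]
  refine h4.congr_deriv ?_
  unfold G F
  simp only [Pi.neg_apply, Pi.mul_apply]
  have key : ∀ c : ℝ, (-Real.log x) ^ (c + 1) = (-Real.log x) ^ c * (-Real.log x) :=
    fun c => by rw [Real.rpow_add ht, Real.rpow_one]
  have e3 : (-Real.log x) ^ (α - 1 - 1) = (-Real.log x) ^ (α - 2) := by
    congr 1; ring
  have e1 : (-Real.log x) ^ (α - 1) = (-Real.log x) ^ (α - 2) * (-Real.log x) := by
    rw [show α - 1 = (α - 2) + 1 by ring, key]
  have e4 : (-Real.log x) ^ α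
      = (-Real.log x) ^ (α - 2) * (-Real.log x) * (-Real.log x) := by
    have h := key (α - 1)
    rw [e1, show α - 1 + 1 = α by ring] at h
    exact h
  rw [e3, e4, e1]
  have hxne : x ≠ 0 := hx0.ne'
  field_simp
  ring

lemma phi_neg {α t : ℝ} (hα0 : 0 < α) (hα1 : α < 1) (ht : 1 < t) :
    α * t ^ α + (1 - α) - t < 0 := by
  have h : t ^ α < t ^ (1 : ℝ) := Real.rpow_lt_rpow_of_exponent_lt ht hα1
  rw [Real.rpow_one] at h
  nlinarith

lemma phi_pos {α t : ℝ} (hα0 : 0 < α) (hα1 : α < 1) (ht0 : 0 < t) (ht1 : t < 1) :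
    0 < α * t ^ α + (1 - α) - t := by
  have h : t ^ (1 : ℝ) < t ^ α := Real.rpow_lt_rpow_of_exponent_gt ht0 ht1 hα1
  rw [Real.rpow_one] at h
  nlinarith

lemma prelec_eventuallyEq {α x : ℝ} (hx0 : 0 < x) :
    prelec α =ᶠ[nhds x] F α := by
  filter_upwards [eventually_ne_nhds hx0.ne'] with y hy
  simp [prelec, F, hy]

lemma deriv2_eq {α x : ℝ} (hx0 : 0 < x) (hx1 : x < 1) :
    deriv^[2] (prelec α) x =
      α * F α x * (x ^ 2)⁻¹ * (-Real.log x) ^ (α - 2) *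
        (α * (-Real.log x) ^ α + (1 - α) - -Real.log x) := by
  have hopen : IsOpen (Set.Ioo (0:ℝ) 1) := isOpen_Ioo
  have hEq : Set.EqOn (deriv (prelec α)) (G α) (Set.Ioo 0 1) := by
    intro y hy
    have h1 : prelec α =ᶠ[nhds y] F α := prelec_eventuallyEq hy.1
    rw [h1.deriv_eq, (hasDerivAt_F hy.1 hy.2).deriv]
  have h2 : deriv (prelec α) =ᶠ[nhds x] G α :=
    Filter.eventuallyEq_of_mem (hopen.mem_nhds ⟨hx0, hx1⟩) hEq
  show deriv (deriv (prelec α)) x = _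
  rw [Filter.EventuallyEq.deriv_eq h2, (hasDerivAt_G hx0 hx1).deriv]

lemma continuousOn_prelec {α : ℝ} (hα : 0 < α) :
    ContinuousOn (prelec α) (Set.Ioo (0:ℝ) 1) := by
  intro x hx
  apply ContinuousAt.continuousWithinAt
  have h1 : prelec α =ᶠ[nhds x] F α := prelec_eventuallyEq hx.1
  rw [continuousAt_congr h1]
  have hc : ContinuousAt (fun y => (-Real.log y) ^ α) x := by
    apply ContinuousAt.rpow_const
    · exact (Real.continuousAt_log hx.1.ne').neg
    · exact Or.inr hα.le
  exact (Real.continuous_exp.continuousAt).comp hc.neg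

end PrelecAux

theorem prelec_strictConcave_strictConvex
    (α : ℝ) (hα : α ∈ Set.Ioo (0 : ℝ) 1) :
    StrictConcaveOn ℝ (Set.Ioc (0 : ℝ) (Real.exp (-1))) (prelec α) ∧
      StrictConvexOn ℝ (Set.Ico (Real.exp (-1)) 1) (prelec α) := by
  obtain ⟨hα0, hα1⟩ := hα
  have he0 : (0:ℝ) < Real.exp (-1) := Real.exp_pos _
  have he1 : Real.exp (-1) < 1 := by
    have := Real.exp_lt_one_iff.mpr (by norm_num : (-1:ℝ) < 0)
    exact this
  constructor
  · apply strictConcaveOn_of_deriv2_neg (convex_Ioc _ _)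
    · exact (PrelecAux.continuousOn_prelec hα0).mono
        (fun y hy => ⟨hy.1, lt_of_le_of_lt hy.2 he1⟩)
    · intro x hx
      rw [interior_Ioc] at hx
      have hx0 : 0 < x := hx.1
      have hx1 : x < 1 := lt_trans hx.2 he1
      rw [PrelecAux.deriv2_eq hx0 hx1]
      have ht : 1 < -Real.log x := by
        have : Real.log x < -1 := (Real.log_lt_iff_lt_exp hx0).mpr hx.2
        linarith
      have ht0 : (0:ℝ) < -Real.log x := by linarith
      have hphi := PrelecAux.phi_neg hα0 hα1 ht
      have hpos : 0 < α * PrelecAux.F α x * (x ^ 2)⁻¹ * (-Real.log x) ^ (α - 2) := by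
        have : 0 < PrelecAux.F α x := Real.exp_pos _
        positivity
      exact mul_neg_of_pos_of_neg hpos hphi
  · apply strictConvexOn_of_deriv2_pos (convex_Ico _ _)
    · exact (PrelecAux.continuousOn_prelec hα0).mono
        (fun y hy => ⟨lt_of_lt_of_le he0 hy.1, hy.2⟩)
    · intro x hx
      rw [interior_Ico] at hx
      have hx0 : 0 < x := lt_trans he0 hx.1
      have hx1 : x < 1 := hx.2
      rw [PrelecAux.deriv2_eq hx0 hx1]
      have ht1 : -Real.log x < 1 := by
        have : -1 < Real.log x := (Real.lt_log_iff_exp_lt hx0).mpr hx.1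
        linarith
      have ht0 : (0:ℝ) < -Real.log x := by
        have := Real.log_neg hx0 hx1; linarith
      have hphi := PrelecAux.phi_pos hα0 hα1 ht0 ht1
      have hpos : 0 < α * PrelecAux.F α x * (x ^ 2)⁻¹ * (-Real.log x) ^ (α - 2) := by
        have : 0 < PrelecAux.F α x := Real.exp_pos _
        positivity
      exact mul_pos hpos hphi
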